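/- Let R be a 2-torsion free semiprime ring, U a square closed Lie ideal of R, and M = R[U,U]R the two-sided ideal of R generated by all commutators [u,v] with u, v ∈ U. If a ∈ M satisfies a·u·a = 0 for all u ∈ U, then a = 0. -/

import Mathlib

/-- Let `R` be a 2-torsion free semiprime ring, `U` a square closed Lie ideal of `R`,
and `M = R[U,U]R`. If `a ∈ M` satisfies `a * u * a = 0` for all `u ∈ U`, then `a = 0`. -/
theorem mem_ideal_gen_comm_ann_lie_ideal_eq_zero (R : Type*) [Ring R]
    (h2 : ∀ x : R, x + x = 0 → x = 0)
    (hsp : ∀ a : R, (∀ r : R, a * r * a = 0) → a = 0)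
    (U : AddSubgroup R)
    (hLie : ∀ u ∈ U, ∀ r : R, u * r - r * u ∈ U)
    (hsq : ∀ u ∈ U, u * u ∈ U)
    (a : R)
    (haM : a ∈ TwoSidedIdeal.span {x : R | ∃ u ∈ U, ∃ v ∈ U, x = u * v - v * u})
    (ha : ∀ u ∈ U, a * u * a = 0) :
    a = 0 := by
  -- For u v ∈ U, uv + vu ∈ U (from squares) hence 2uv ∈ U.
  have h2uv : ∀ u ∈ U, ∀ v ∈ U, u * v + u * v ∈ U := by
    intro u hu v hv
    have h1 : u * v + v * u ∈ U := by
      have := hsq (u + v) (U.add_mem hu hv)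
      have e : u * v + v * u = (u + v) * (u + v) - u * u - v * v := by noncomm_ring
      rw [e]
      exact U.sub_mem (U.sub_mem this (hsq u hu)) (hsq v hv)
    have h2' : u * v - v * u ∈ U := hLie u hu v
    have e : u * v + u * v = (u * v + v * u) + (u * v - v * u) := by noncomm_ring
    rw [e]; exact U.add_mem h1 h2'
  -- 2·[u,v]·x ∈ U
  have L1 : ∀ u ∈ U, ∀ v ∈ U, ∀ x : R,
      (u * v - v * u) * x + (u * v - v * u) * x ∈ U := by
    intro u hu v hv x
    have hA : (u * (v * x) - (v * x) * u) + (u * (v * x) - (v * x) * u) ∈ U :=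
      U.add_mem (hLie u hu (v * x)) (hLie u hu (v * x))
    have hB : v * (u * x - x * u) + v * (u * x - x * u) ∈ U :=
      h2uv v hv _ (hLie u hu x)
    have e : (u * v - v * u) * x + (u * v - v * u) * x =
        ((u * (v * x) - (v * x) * u) + (u * (v * x) - (v * x) * u)) -
        (v * (u * x - x * u) + v * (u * x - x * u)) := by noncomm_ring
    rw [e]; exact U.sub_mem hA hB
  -- 2·x·[u,v] ∈ U
  have L2 : ∀ u ∈ U, ∀ v ∈ U, ∀ x : R,
      x * (u * v - v * u) + x * (u * v - v * u) ∈ U := by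
    intro u hu v hv x
    have hA : (u * (x * v) - (x * v) * u) + (u * (x * v) - (x * v) * u) ∈ U :=
      U.add_mem (hLie u hu (x * v)) (hLie u hu (x * v))
    have hB : (u * x - x * u) * v + (u * x - x * u) * v ∈ U := by
      have := h2uv _ (hLie u hu x) v hv
      exact this
    have e : x * (u * v - v * u) + x * (u * v - v * u) =
        ((u * (x * v) - (x * v) * u) + (u * (x * v) - (x * v) * u)) -
        ((u * x - x * u) * v + (u * x - x * u) * v) := by noncomm_ring
    rw [e]; exact U.sub_mem hA hB
  -- 2·x·[u,v]·y ∈ U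
  have L3 : ∀ u ∈ U, ∀ v ∈ U, ∀ x y : R,
      x * (u * v - v * u) * y + x * (u * v - v * u) * y ∈ U := by
    intro u hu v hv x y
    -- 2 x c y = [2xc, y] + 2(yx)c  where c = [u,v]
    have hxc : x * (u * v - v * u) + x * (u * v - v * u) ∈ U := L2 u hu v hv x
    have hA : (x * (u * v - v * u) + x * (u * v - v * u)) * y -
        y * (x * (u * v - v * u) + x * (u * v - v * u)) ∈ U := hLie _ hxc y
    have hB : (y * x) * (u * v - v * u) + (y * x) * (u * v - v * u) ∈ U :=
      L2 u hu v hv (y * x)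
    have e : x * (u * v - v * u) * y + x * (u * v - v * u) * y =
        ((x * (u * v - v * u) + x * (u * v - v * u)) * y -
          y * (x * (u * v - v * u) + x * (u * v - v * u))) +
        ((y * x) * (u * v - v * u) + (y * x) * (u * v - v * u)) := by noncomm_ring
    rw [e]; exact U.add_mem hA hB
  set S : Set R := {x : R | ∃ u ∈ U, ∃ v ∈ U, x = u * v - v * u} with hS
  -- every element of the span doubles into U
  have key : ∀ m ∈ TwoSidedIdeal.span S, m + m ∈ U := by
    intro m hm
    rw [TwoSidedIdeal.mem_span_iff_mem_addSubgroup_closure] at hm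
    induction hm using AddSubgroup.closure_induction with
    | mem g hg =>
      obtain ⟨p, ⟨q, -, c, hc, rfl⟩, r, -, rfl⟩ := hg
      obtain ⟨u, hu, v, hv, rfl⟩ := hc
      exact L3 u hu v hv q r
    | zero => simpa using U.zero_mem
    | add x y hx hy ihx ihy =>
      have e : (x + y) + (x + y) = (x + x) + (y + y) := by abel
      rw [e]; exact U.add_mem ihx ihy
    | neg x hx ihx =>
      have e : (-x) + (-x) = -(x + x) := by abel
      rw [e]; exact U.neg_mem ihx
  -- hence a * m * a = 0 for every m in the span
  have hma : ∀ m ∈ TwoSidedIdeal.span S, a * m * a = 0 := by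
    intro m hm
    have := ha _ (key m hm)
    have e : a * (m + m) * a = a * m * a + a * m * a := by noncomm_ring
    rw [e] at this
    exact h2 _ this
  -- semiprime finish
  have hara : ∀ r : R, a * r * a = 0 := by
    intro r
    refine hsp _ (fun s => ?_)
    have hmem : r * a * s * a * r ∈ TwoSidedIdeal.span S := by
      have h1 : r * a ∈ TwoSidedIdeal.span S :=
        (TwoSidedIdeal.span S).mul_mem_left r a haM
      have h2' : r * a * s ∈ TwoSidedIdeal.span S :=
        (TwoSidedIdeal.span S).mul_mem_right _ s h1
      have h3 : r * a * s * a ∈ TwoSidedIdeal.span S :=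
        (TwoSidedIdeal.span S).mul_mem_right _ a h2'
      exact (TwoSidedIdeal.span S).mul_mem_right _ r h3
    have := hma _ hmem
    calc a * r * a * s * (a * r * a) = a * (r * a * s * a * r) * a := by noncomm_ring
      _ = 0 := this
  exact hsp a hara
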